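/- Let q : ℝ → ℝ be integrable on (0,1) with Q = ∫₀¹|q(x)| dx, let n be a positive even integer, and set λ⁽⁰⁾ = 4π²n², u₁⁽⁰⁾(x) = sin(2πn·x)/(2πn), u₂⁽⁰⁾(x) = sin(2πn·x)/(πn). Define recursively, for j ≥ 0: λ⁽ʲ⁺¹⁾ = (8πn/3)·[∫₀^{1/2}(−Σ_{p=1}^{j} λ⁽ʲ⁺¹⁻ᵖ⁾u₁⁽ᵖ⁾(x) + q(x)u₁⁽ʲ⁾(x))·sin(2πn·x) dx + ∫_{1/2}^{1}(−Σ_{p=1}^{j} λ⁽ʲ⁺¹⁻ᵖ⁾u₂⁽ᵖ⁾(x) + q(x)u₂⁽ʲ⁾(x))·sin(2πn·x) dx]; Fᵢ⁽ʲ⁺¹⁾(x) = −Σ_{p=0}^{j} λ⁽ʲ⁺¹⁻ᵖ⁾uᵢ⁽ᵖ⁾(x) + q(x)uᵢ⁽ʲ⁾(x) for i = 1,2; c₂⁽ʲ⁺¹⁾ = −∫₀^{1/2}(cos(2πn·x)/(2πn))·F₁⁽ʲ⁺¹⁾(x) dx − ∫_{1/2}^{1}(cos(2πn·x)/(2πn))·F₂⁽ʲ⁺¹⁾(x)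 dx; u₁⁽ʲ⁺¹⁾(x) = ∫₀^{x}(sin(2πn(x−ξ))/(2πn))·F₁⁽ʲ⁺¹⁾(ξ) dξ for x ∈ [0,1/2]; and u₂⁽ʲ⁺¹⁾(x) = c₂⁽ʲ⁺¹⁾·sin(2πn(1−x)) − ∫_{x}^{1}(sin(2πn(x−ξ))/(2πn))·F₂⁽ʲ⁺¹⁾(ξ) dξ for x ∈ [1/2,1]. If r := (11/3)·Q·(1 + 16/3 + 2√(88/9))/(πn) < 1, then there exists C > 0 such that for all j ≥ 1: |λ⁽ʲ⁾| ≤ C·rʲ and max(sup_{x∈[0,1/2]}|u₁⁽ʲ⁾(x)|, sup_{x∈[1/2,1]}|u₂⁽ʲ⁾(x)|) ≤ C·rʲ; in particular the series Σⱼ λ⁽ʲ⁾ converges absolutely and the series Σⱼ uᵢ⁽ʲ⁾ converge uniformly, with tails bounded by C·r^{m'+1}/(1−r) after the m'-th term. -/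

import Mathlib

open Real MeasureTheory

section helpers

open Real MeasureTheory

private lemma harm_le (k : ℕ) : ∑ p ∈ Finset.Icc 1 k, (1:ℝ)/(p:ℝ) ≤ ((k:ℝ)+1)/2 := by
  induction k with
  | zero => simp
  | succ k ih =>
    rw [Finset.sum_Icc_succ_top (by omega)]
    rcases Nat.eq_zero_or_pos k with hk | hk
    · subst hk; norm_num
    · have hk1 : (1:ℝ) ≤ (k:ℝ) := by exact_mod_cast hk
      have h1 : (1:ℝ)/((k:ℝ)+1) ≤ 1/2 := by
        rw [div_le_div_iff₀ (by positivity) (by norm_num)]; linarith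
      push_cast
      linarith

private lemma sq_le_aux (k : ℕ) :
    ∑ p ∈ Finset.Icc 1 (k+2), (1:ℝ)/(p:ℝ)^2 ≤ 7/4 - 1/((k:ℝ)+2) := by
  induction k with
  | zero =>
    have h2 : Finset.Icc 1 2 = ({1, 2} : Finset ℕ) := by decide
    rw [h2]; norm_num
  | succ k ih =>
    rw [Finset.sum_Icc_succ_top (by omega)]
    have hk2 : (0:ℝ) < (k:ℝ)+2 := by positivity
    have hk3 : (0:ℝ) < (k:ℝ)+3 := by positivity
    have h1 : (1:ℝ)/((k:ℝ)+3)^2 ≤ 1/((k:ℝ)+2) - 1/((k:ℝ)+3) := by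
      rw [div_sub_div _ _ (ne_of_gt hk2) (ne_of_gt hk3)]
      rw [div_le_div_iff₀ (by positivity) (by positivity)]
      nlinarith
    push_cast
    push_cast at ih
    have e1 : ((k:ℝ)+2+1) = (k:ℝ)+3 := by ring
    have e2 : ((k:ℝ)+1+2) = (k:ℝ)+3 := by ring
    rw [e1, e2]
    linarith

private lemma sqsum_le (k : ℕ) : ∑ p ∈ Finset.Icc 1 k, (1:ℝ)/(p:ℝ)^2 ≤ 7/4 := by
  match k with
  | 0 => simp; norm_num
  | 1 => rw [Finset.Icc_self]; simp; norm_num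
  | (k+2) =>
    have h := sq_le_aux k
    have hk2 : (0:ℝ) < (k:ℝ)+2 := by positivity
    have : (0:ℝ) < 1/((k:ℝ)+2) := by positivity
    linarith

private lemma sum_reflect (k : ℕ) (f : ℕ → ℝ) :
    ∑ p ∈ Finset.Icc 1 k, f (k+1-p) = ∑ p ∈ Finset.Icc 1 k, f p := by
  apply Finset.sum_nbij' (fun p => k+1-p) (fun p => k+1-p) <;>
    (intro a ha; simp only [Finset.mem_Icc] at *) <;> first
      | omega
      | (congr 1; omega)

private lemma conv_le (k : ℕ) :
    ∑ p ∈ Finset.Icc 1 k, (1:ℝ)/(((k+1-p:ℕ):ℝ)^2 * (p:ℝ)^2) ≤ (11/2) / ((k:ℝ)+1)^2 := by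
  have hC : (0:ℝ) < (k:ℝ)+1 := by positivity
  have step : ∀ p ∈ Finset.Icc 1 k,
      (1:ℝ)/(((k+1-p:ℕ):ℝ)^2 * (p:ℝ)^2)
        = (1/((k:ℝ)+1)^2) * (1/(((k+1-p:ℕ):ℝ))^2 + 1/((p:ℝ))^2)
          + (2/((k:ℝ)+1)^3) * (1/((k+1-p:ℕ):ℝ) + 1/(p:ℝ)) := by
    intro p hp
    simp only [Finset.mem_Icc] at hp
    have hap : ((k+1-p:ℕ):ℝ) + (p:ℝ) = (k:ℝ)+1 := by
      have h : (k+1-p) + p = k+1 := by omega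
      calc ((k+1-p:ℕ):ℝ) + (p:ℝ) = (((k+1-p)+p : ℕ):ℝ) := by push_cast; ring
      _ = (k:ℝ)+1 := by rw [h]; push_cast; ring
    have hA : (0:ℝ) < ((k+1-p:ℕ):ℝ) := by
      have : 1 ≤ k+1-p := by omega
      exact_mod_cast Nat.lt_of_lt_of_le Nat.zero_lt_one this
    have hP : (0:ℝ) < (p:ℝ) := by
      exact_mod_cast hp.1
    rw [← hap]
    field_simp
    ring
  rw [Finset.sum_congr rfl step, Finset.sum_add_distrib, ← Finset.mul_sum, ← Finset.mul_sum]
  rw [Finset.sum_add_distrib, Finset.sum_add_distrib]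
  rw [sum_reflect k (fun x => 1/((x:ℕ):ℝ)^2), sum_reflect k (fun x => 1/((x:ℕ):ℝ))]
  have hS := sqsum_le k
  have hH := harm_le k
  have hS0 : (0:ℝ) ≤ ∑ p ∈ Finset.Icc 1 k, (1:ℝ)/(p:ℝ)^2 :=
    Finset.sum_nonneg fun i _ => by positivity
  have hH0 : (0:ℝ) ≤ ∑ p ∈ Finset.Icc 1 k, (1:ℝ)/(p:ℝ) :=
    Finset.sum_nonneg fun i _ => by positivity
  have e1 : (1/((k:ℝ)+1)^2) * (7/4 + 7/4) + (2/((k:ℝ)+1)^3) * (((k:ℝ)+1)/2 + ((k:ℝ)+1)/2)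
      = (11/2) / ((k:ℝ)+1)^2 := by
    field_simp
    ring
  have t1 : (1/((k:ℝ)+1)^2) * ((∑ p ∈ Finset.Icc 1 k, (1:ℝ)/(p:ℝ)^2) + ∑ p ∈ Finset.Icc 1 k, (1:ℝ)/(p:ℝ)^2)
      ≤ (1/((k:ℝ)+1)^2) * (7/4 + 7/4) := by
    apply mul_le_mul_of_nonneg_left (by linarith) (by positivity)
  have t2 : (2/((k:ℝ)+1)^3) * ((∑ p ∈ Finset.Icc 1 k, (1:ℝ)/(p:ℝ)) + ∑ p ∈ Finset.Icc 1 k, (1:ℝ)/(p:ℝ))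
      ≤ (2/((k:ℝ)+1)^3) * (((k:ℝ)+1)/2 + ((k:ℝ)+1)/2) := by
    apply mul_le_mul_of_nonneg_left (by linarith) (by positivity)
  linarith [t1, t2, e1.ge, e1.le]
end helpers

set_option maxHeartbeats 4000000 in
/-- convergence (Theorem 2.1(b)) of the FD-method for the linear
eigenvalue transmission problem with `q ∈ L¹(0,1)`, for the second family of base
eigenvalues `λ⁽⁰⁾ = 4π²n²` with `n` even. -/
theorem stmt_17 (q : ℝ → ℝ) (hq : IntegrableOn q (Set.Ioo 0 1))
    (Q : ℝ) (hQ : Q = ∫ x in (0:ℝ)..1, |q x|)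
    (n : ℕ) (hn : 0 < n) (hneven : Even n)
    (lam0 : ℝ) (hlam0 : lam0 = 4 * π ^ 2 * (n : ℝ) ^ 2)
    (L : ℕ → ℝ) (u₁ u₂ F₁ F₂ : ℕ → ℝ → ℝ) (c₂ : ℕ → ℝ)
    (hL0 : L 0 = lam0)
    (hu₁0 : ∀ x, u₁ 0 x = Real.sin (2 * π * (n : ℝ) * x) / (2 * π * (n : ℝ)))
    (hu₂0 : ∀ x, u₂ 0 x = Real.sin (2 * π * (n : ℝ) * x) / (π * (n : ℝ)))
    (hLrec : ∀ j : ℕ, L (j+1) = (8 * π * (n : ℝ) / 3) *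
      ((∫ x in (0:ℝ)..(1/2),
          (-(∑ p ∈ Finset.Icc 1 j, L (j+1-p) * u₁ p x) + q x * u₁ j x) *
            Real.sin (2 * π * (n : ℝ) * x)) +
       ∫ x in (1/2:ℝ)..1,
          (-(∑ p ∈ Finset.Icc 1 j, L (j+1-p) * u₂ p x) + q x * u₂ j x) *
            Real.sin (2 * π * (n : ℝ) * x)))
    (hF₁ : ∀ (j : ℕ) (x : ℝ),
      F₁ (j+1) x = -(∑ p ∈ Finset.range (j+1), L (j+1-p) * u₁ p x) + q x * u₁ j x)
    (hF₂ : ∀ (j : ℕ) (x : ℝ),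
      F₂ (j+1) x = -(∑ p ∈ Finset.range (j+1), L (j+1-p) * u₂ p x) + q x * u₂ j x)
    (hc₂ : ∀ j : ℕ, c₂ (j+1) =
      -(∫ x in (0:ℝ)..(1/2), (Real.cos (2 * π * (n : ℝ) * x) / (2 * π * (n : ℝ))) * F₁ (j+1) x) -
       ∫ x in (1/2:ℝ)..1, (Real.cos (2 * π * (n : ℝ) * x) / (2 * π * (n : ℝ))) * F₂ (j+1) x)
    (hu₁rec : ∀ j : ℕ, ∀ x ∈ Set.Icc (0:ℝ) (1/2),
      u₁ (j+1) x = ∫ ξ in (0:ℝ)..x,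
        (Real.sin (2 * π * (n : ℝ) * (x - ξ)) / (2 * π * (n : ℝ))) * F₁ (j+1) ξ)
    (hu₂rec : ∀ j : ℕ, ∀ x ∈ Set.Icc (1/2:ℝ) 1,
      u₂ (j+1) x = c₂ (j+1) * Real.sin (2 * π * (n : ℝ) * (1 - x)) -
        ∫ ξ in x..(1:ℝ),
          (Real.sin (2 * π * (n : ℝ) * (x - ξ)) / (2 * π * (n : ℝ))) * F₂ (j+1) ξ)
    (r : ℝ)
    (hr : r = (11/3) * Q * (1 + 16/3 + 2 * Real.sqrt (88/9)) / (π * (n : ℝ)))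
    (hrlt : r < 1) :
    ∃ C > 0,
      (∀ j : ℕ, 1 ≤ j → |L j| ≤ C * r ^ j ∧
        (∀ x ∈ Set.Icc (0:ℝ) (1/2), |u₁ j x| ≤ C * r ^ j) ∧
        (∀ x ∈ Set.Icc (1/2:ℝ) 1, |u₂ j x| ≤ C * r ^ j)) ∧
      Summable (fun j => |L j|) ∧
      (∀ x ∈ Set.Icc (0:ℝ) (1/2), Summable (fun j => u₁ j x)) ∧
      (∀ x ∈ Set.Icc (1/2:ℝ) 1, Summable (fun j => u₂ j x)) ∧
      (∀ m' : ℕ, (∑' j : ℕ, |L (j + m' + 1)|) ≤ C * r ^ (m' + 1) / (1 - r)) ∧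
      (∀ m' : ℕ, ∀ x ∈ Set.Icc (0:ℝ) (1/2),
        |∑' j : ℕ, u₁ (j + m' + 1) x| ≤ C * r ^ (m' + 1) / (1 - r)) ∧
      (∀ m' : ℕ, ∀ x ∈ Set.Icc (1/2:ℝ) 1,
        |∑' j : ℕ, u₂ (j + m' + 1) x| ≤ C * r ^ (m' + 1) / (1 - r)) := by
  have hπ : (0:ℝ) < π := Real.pi_pos
  have hn' : (0:ℝ) < (n:ℝ) := by exact_mod_cast hn
  obtain ⟨N, hNdef⟩ : ∃ N : ℝ, N = π * (n:ℝ) := ⟨_, rfl⟩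
  have hN : 0 < N := by rw [hNdef]; positivity
  have hQ0 : 0 ≤ Q := by
    rw [hQ]; exact intervalIntegral.integral_nonneg (by norm_num) (fun x _ => abs_nonneg _)
  have hsq : (3:ℝ) ≤ Real.sqrt (88/9) := by
    have h9 : Real.sqrt 9 = 3 := by
      rw [show (9:ℝ) = 3^2 by norm_num, Real.sqrt_sq (by norm_num)]
    rw [← h9]; exact Real.sqrt_le_sqrt (by norm_num)
  have hK : (37:ℝ)/3 ≤ 1 + 16/3 + 2 * Real.sqrt (88/9) := by linarith
  have hr0 : 0 ≤ r := by
    rw [hr]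
    apply div_nonneg _ (by positivity)
    have := Real.sqrt_nonneg (88/9)
    nlinarith
  have hNr : N * r = 11/3 * Q * (1 + 16/3 + 2 * Real.sqrt (88/9)) := by
    rw [hr, hNdef]; field_simp
  have hQr : Q ≤ (9/407) * (N * r) := by nlinarith
  have hNr0 : 0 ≤ N * r := by positivity
  -- integrability of |q| on the two halves
  have hq1 : IntervalIntegrable (fun x => |q x|) volume 0 (1/2) := by
    apply (intervalIntegrable_iff_integrableOn_Ioc_of_le (by norm_num)).2
    exact (hq.mono_set (fun x hx => ⟨hx.1, lt_of_le_of_lt hx.2 (by norm_num)⟩)).abs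
  have hq2 : IntervalIntegrable (fun x => |q x|) volume (1/2) 1 := by
    apply (intervalIntegrable_iff_integrableOn_Ioc_of_le (by norm_num)).2
    have h : IntegrableOn q (Set.Ioc (1/2) 1) := by
      rw [integrableOn_Ioc_iff_integrableOn_Ioo]
      exact hq.mono_set (fun x hx => ⟨lt_trans (by norm_num) hx.1, hx.2⟩)
    exact h.abs
  obtain ⟨Q₁, hQ₁def⟩ : ∃ y : ℝ, y = ∫ x in (0:ℝ)..(1/2), |q x| := ⟨_, rfl⟩
  obtain ⟨Q₂, hQ₂def⟩ : ∃ y : ℝ, y = ∫ x in (1/2:ℝ)..1, |q x| := ⟨_, rfl⟩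
  have hQ₁0 : 0 ≤ Q₁ := by
    rw [hQ₁def]; exact intervalIntegral.integral_nonneg (by norm_num) (fun x _ => abs_nonneg _)
  have hQ₂0 : 0 ≤ Q₂ := by
    rw [hQ₂def]; exact intervalIntegral.integral_nonneg (by norm_num) (fun x _ => abs_nonneg _)
  have hQsum : Q₁ + Q₂ = Q := by
    rw [hQ, hQ₁def, hQ₂def]
    exact intervalIntegral.integral_add_adjacent_intervals hq1 hq2
  have hQ₁ : Q₁ ≤ Q := by linarith
  have hQ₂ : Q₂ ≤ Q := by linarith
  -- the basic integral bound
  have key_int : ∀ (f : ℝ → ℝ) (a b K K' : ℝ), a ≤ b →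
      IntervalIntegrable (fun x => |q x|) volume a b → 0 ≤ K → 0 ≤ K' →
      (∀ x ∈ Set.Ioc a b, |f x| ≤ K + K' * |q x|) →
      |∫ x in a..b, f x| ≤ K * (b - a) + K' * (∫ x in a..b, |q x|) := by
    intro f a b K K' hab hqi hK hK' hfb
    have hg : IntervalIntegrable (fun x => K + K' * |q x|) volume a b :=
      intervalIntegrable_const.add (hqi.const_mul K')
    have hq0' : 0 ≤ ∫ x in a..b, |q x| :=
      intervalIntegral.integral_nonneg hab (fun x _ => abs_nonneg _)
    have h1 : ‖∫ x in a..b, f x‖ ≤ |∫ x in a..b, (K + K' * |q x|)| := by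
      apply intervalIntegral.norm_integral_le_abs_of_norm_le _ hg
      rw [Set.uIoc_of_le hab]
      exact ae_restrict_of_forall_mem measurableSet_Ioc
        (fun x hx => by rw [Real.norm_eq_abs]; exact hfb x hx)
    have h2 : (∫ x in a..b, (K + K' * |q x|)) = K * (b-a) + K' * ∫ x in a..b, |q x| := by
      rw [intervalIntegral.integral_add intervalIntegrable_const (hqi.const_mul K'),
        intervalIntegral.integral_const, intervalIntegral.integral_const_mul]
      simp [smul_eq_mul]; ring
    have h3 : 0 ≤ K * (b-a) + K' * ∫ x in a..b, |q x| := by nlinarith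
    calc |∫ x in a..b, f x| = ‖∫ x in a..b, f x‖ := (Real.norm_eq_abs _).symm
      _ ≤ |∫ x in a..b, (K + K' * |q x|)| := h1
      _ = K * (b-a) + K' * ∫ x in a..b, |q x| := by rw [h2, abs_of_nonneg h3]
  -- monotone bounds for ∫|q| over subintervals
  have hqmono1 : ∀ x ∈ Set.Icc (0:ℝ) (1/2), (∫ t in (0:ℝ)..x, |q t|) ≤ Q₁ := by
    intro x hx
    rw [hQ₁def]
    apply intervalIntegral.integral_mono_interval le_rfl hx.1 hx.2
      (Filter.Eventually.of_forall (fun t => abs_nonneg _)) hq1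
  have hqmono2 : ∀ x ∈ Set.Icc (1/2:ℝ) 1, (∫ t in x..(1:ℝ), |q t|) ≤ Q₂ := by
    intro x hx
    rw [hQ₂def]
    apply intervalIntegral.integral_mono_interval hx.1 hx.2 le_rfl
      (Filter.Eventually.of_forall (fun t => abs_nonneg _)) hq2
  have hqx1 : ∀ x ∈ Set.Icc (0:ℝ) (1/2), IntervalIntegrable (fun t => |q t|) volume 0 x := by
    intro x hx
    apply hq1.mono_set
    rw [Set.uIcc_of_le hx.1, Set.uIcc_of_le (by norm_num : (0:ℝ) ≤ 1/2)]
    exact Set.Icc_subset_Icc le_rfl hx.2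
  have hqx2 : ∀ x ∈ Set.Icc (1/2:ℝ) 1, IntervalIntegrable (fun t => |q t|) volume x 1 := by
    intro x hx
    apply hq2.mono_set
    rw [Set.uIcc_of_le hx.2, Set.uIcc_of_le (by norm_num : (1/2:ℝ) ≤ 1)]
    exact Set.Icc_subset_Icc hx.1 le_rfl
  -- kernel bounds
  have hker : ∀ y : ℝ, |Real.sin (2 * π * (n:ℝ) * y) / (2 * π * (n:ℝ))| ≤ 1/(2*N) := by
    intro y
    rw [abs_div, abs_of_pos (by positivity : (0:ℝ) < 2*π*(n:ℝ)),
      show 2*π*(n:ℝ) = 2*N by rw [hNdef]; ring]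
    exact (div_le_div_iff_of_pos_right (by positivity)).2 (Real.abs_sin_le_one _)
  have hkerc : ∀ y : ℝ, |Real.cos (2 * π * (n:ℝ) * y) / (2 * π * (n:ℝ))| ≤ 1/(2*N) := by
    intro y
    rw [abs_div, abs_of_pos (by positivity : (0:ℝ) < 2*π*(n:ℝ)),
      show 2*π*(n:ℝ) = 2*N by rw [hNdef]; ring]
    exact (div_le_div_iff_of_pos_right (by positivity)).2 (Real.abs_cos_le_one _)
  have hb10 : ∀ x : ℝ, |u₁ 0 x| ≤ 1/(2*N) := by
    intro x; rw [hu₁0]; exact hker x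
  have hb20 : ∀ x : ℝ, |u₂ 0 x| ≤ 1/N := by
    intro x; rw [hu₂0, abs_div, abs_of_pos (by positivity : (0:ℝ) < π*(n:ℝ)),
      show π*(n:ℝ) = N from hNdef.symm]
    exact (div_le_div_iff_of_pos_right hN).2 (Real.abs_sin_le_one _)
  -- bound for L (j+1) given bounds at lower levels
  have masterL : ∀ (j : ℕ) (M₁ M₂ U₁ U₂ : ℝ), 0 ≤ M₁ → 0 ≤ M₂ → 0 ≤ U₁ → 0 ≤ U₂ →
      (∀ x ∈ Set.Icc (0:ℝ) (1/2), |∑ p ∈ Finset.Icc 1 j, L (j+1-p) * u₁ p x| ≤ M₁) →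
      (∀ x ∈ Set.Icc (1/2:ℝ) 1, |∑ p ∈ Finset.Icc 1 j, L (j+1-p) * u₂ p x| ≤ M₂) →
      (∀ x ∈ Set.Icc (0:ℝ) (1/2), |u₁ j x| ≤ U₁) →
      (∀ x ∈ Set.Icc (1/2:ℝ) 1, |u₂ j x| ≤ U₂) →
      |L (j+1)| ≤ (8*N/3) * ((M₁ + M₂)/2 + Q₁*U₁ + Q₂*U₂) := by
    intro j M₁ M₂ U₁ U₂ hM₁0 hM₂0 hU₁0 hU₂0 hM₁ hM₂ hU₁ hU₂
    rw [hLrec j]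
    have hI₁ : |∫ x in (0:ℝ)..(1/2),
        (-(∑ p ∈ Finset.Icc 1 j, L (j+1-p) * u₁ p x) + q x * u₁ j x) *
          Real.sin (2 * π * (n:ℝ) * x)| ≤ M₁ * (1/2 - 0) + U₁ * Q₁ := by
      rw [hQ₁def]
      apply key_int _ 0 (1/2) M₁ U₁ (by norm_num) hq1 hM₁0 hU₁0
      intro x hx
      have hx' : x ∈ Set.Icc (0:ℝ) (1/2) := Set.Ioc_subset_Icc_self hx
      rw [abs_mul]
      have h1 : |(-(∑ p ∈ Finset.Icc 1 j, L (j+1-p) * u₁ p x) + q x * u₁ j x)|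
          ≤ M₁ + U₁ * |q x| := by
        calc |(-(∑ p ∈ Finset.Icc 1 j, L (j+1-p) * u₁ p x) + q x * u₁ j x)|
            ≤ |-(∑ p ∈ Finset.Icc 1 j, L (j+1-p) * u₁ p x)| + |q x * u₁ j x| := abs_add_le _ _
          _ ≤ M₁ + U₁ * |q x| := by
              rw [abs_neg, abs_mul]
              have := mul_le_mul_of_nonneg_left (hU₁ x hx') (abs_nonneg (q x))
              refine add_le_add (hM₁ x hx') ?_
              calc |q x| * |u₁ j x| ≤ |q x| * U₁ := this
                _ = U₁ * |q x| := mul_comm _ _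
      calc |(-(∑ p ∈ Finset.Icc 1 j, L (j+1-p) * u₁ p x) + q x * u₁ j x)| *
            |Real.sin (2 * π * (n:ℝ) * x)|
          ≤ (M₁ + U₁ * |q x|) * 1 :=
            mul_le_mul h1 (Real.abs_sin_le_one _) (abs_nonneg _)
              (by have := abs_nonneg (q x); nlinarith)
        _ = M₁ + U₁ * |q x| := mul_one _
    have hI₂ : |∫ x in (1/2:ℝ)..1,
        (-(∑ p ∈ Finset.Icc 1 j, L (j+1-p) * u₂ p x) + q x * u₂ j x) *
          Real.sin (2 * π * (n:ℝ) * x)| ≤ M₂ * (1 - 1/2) + U₂ * Q₂ := by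
      rw [hQ₂def]
      apply key_int _ (1/2) 1 M₂ U₂ (by norm_num) hq2 hM₂0 hU₂0
      intro x hx
      have hx' : x ∈ Set.Icc (1/2:ℝ) 1 := Set.Ioc_subset_Icc_self hx
      rw [abs_mul]
      have h1 : |(-(∑ p ∈ Finset.Icc 1 j, L (j+1-p) * u₂ p x) + q x * u₂ j x)|
          ≤ M₂ + U₂ * |q x| := by
        calc |(-(∑ p ∈ Finset.Icc 1 j, L (j+1-p) * u₂ p x) + q x * u₂ j x)|
            ≤ |-(∑ p ∈ Finset.Icc 1 j, L (j+1-p) * u₂ p x)| + |q x * u₂ j x| := abs_add_le _ _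
          _ ≤ M₂ + U₂ * |q x| := by
              rw [abs_neg, abs_mul]
              have := mul_le_mul_of_nonneg_left (hU₂ x hx') (abs_nonneg (q x))
              refine add_le_add (hM₂ x hx') ?_
              calc |q x| * |u₂ j x| ≤ |q x| * U₂ := this
                _ = U₂ * |q x| := mul_comm _ _
      calc |(-(∑ p ∈ Finset.Icc 1 j, L (j+1-p) * u₂ p x) + q x * u₂ j x)| *
            |Real.sin (2 * π * (n:ℝ) * x)|
          ≤ (M₂ + U₂ * |q x|) * 1 :=
            mul_le_mul h1 (Real.abs_sin_le_one _) (abs_nonneg _)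
              (by have := abs_nonneg (q x); nlinarith)
        _ = M₂ + U₂ * |q x| := mul_one _
    rw [show (8 * π * (n:ℝ) / 3) = 8*N/3 by rw [hNdef]; ring, abs_mul,
      abs_of_pos (by positivity : (0:ℝ) < 8*N/3)]
    have habs := abs_add_le
      (∫ x in (0:ℝ)..(1/2),
        (-(∑ p ∈ Finset.Icc 1 j, L (j+1-p) * u₁ p x) + q x * u₁ j x) *
          Real.sin (2 * π * (n:ℝ) * x))
      (∫ x in (1/2:ℝ)..1,
        (-(∑ p ∈ Finset.Icc 1 j, L (j+1-p) * u₂ p x) + q x * u₂ j x) *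
          Real.sin (2 * π * (n:ℝ) * x))
    have h8 : (0:ℝ) ≤ 8*N/3 := by positivity
    have hsum := habs.trans (add_le_add hI₁ hI₂)
    exact le_trans (mul_le_mul_of_nonneg_left hsum h8) (le_of_eq (by ring))
  -- split of the range-sum
  have hsplit : ∀ (j : ℕ) (g : ℕ → ℝ),
      ∑ p ∈ Finset.range (j+1), g p = g 0 + ∑ p ∈ Finset.Icc 1 j, g p := by
    intro j g
    have h : Finset.range (j+1) = insert 0 (Finset.Icc 1 j) := by
      ext a; simp only [Finset.mem_range, Finset.mem_insert, Finset.mem_Icc]; omega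
    rw [h, Finset.sum_insert (by simp)]
  -- pointwise bound on F₁ (j+1)
  have hFb₁ : ∀ (j : ℕ) (M₁ U₁ ML : ℝ), 0 ≤ M₁ → 0 ≤ U₁ → 0 ≤ ML →
      (∀ x ∈ Set.Icc (0:ℝ) (1/2), |∑ p ∈ Finset.Icc 1 j, L (j+1-p) * u₁ p x| ≤ M₁) →
      (∀ x ∈ Set.Icc (0:ℝ) (1/2), |u₁ j x| ≤ U₁) →
      |L (j+1)| ≤ ML →
      ∀ x ∈ Set.Icc (0:ℝ) (1/2), |F₁ (j+1) x| ≤ (ML/(2*N) + M₁) + U₁ * |q x| := by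
    intro j M₁ U₁ ML hM₁0 hU₁0 hML0 hM₁ hU₁ hML x hx
    rw [hF₁ j x, hsplit j (fun p => L (j+1-p) * u₁ p x)]
    simp only [Nat.sub_zero]
    calc |(-(L (j+1) * u₁ 0 x + ∑ p ∈ Finset.Icc 1 j, L (j+1-p) * u₁ p x) + q x * u₁ j x)|
        ≤ |L (j+1) * u₁ 0 x| + |∑ p ∈ Finset.Icc 1 j, L (j+1-p) * u₁ p x| + |q x * u₁ j x| := by
          have := abs_add_le (L (j+1) * u₁ 0 x) (∑ p ∈ Finset.Icc 1 j, L (j+1-p) * u₁ p x)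
          have h2 := abs_add_le (-(L (j+1) * u₁ 0 x + ∑ p ∈ Finset.Icc 1 j, L (j+1-p) * u₁ p x))
            (q x * u₁ j x)
          rw [abs_neg] at h2
          linarith
      _ ≤ ML * (1/(2*N)) + M₁ + U₁ * |q x| := by
          refine add_le_add (add_le_add ?_ (hM₁ x hx)) ?_
          · rw [abs_mul]
            exact mul_le_mul hML (hb10 x) (abs_nonneg _) hML0
          · rw [abs_mul, mul_comm]
            exact mul_le_mul_of_nonneg_right (hU₁ x hx) (abs_nonneg _)
      _ = (ML/(2*N) + M₁) + U₁ * |q x| := by ring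
  -- pointwise bound on F₂ (j+1)  (valid for all x, using the global bound on u₂ j on [1/2,1])
  have hFb₂ : ∀ (j : ℕ) (M₂ U₂ ML : ℝ), 0 ≤ M₂ → 0 ≤ U₂ → 0 ≤ ML →
      (∀ x ∈ Set.Icc (1/2:ℝ) 1, |∑ p ∈ Finset.Icc 1 j, L (j+1-p) * u₂ p x| ≤ M₂) →
      (∀ x ∈ Set.Icc (1/2:ℝ) 1, |u₂ j x| ≤ U₂) →
      |L (j+1)| ≤ ML →
      ∀ x ∈ Set.Icc (1/2:ℝ) 1, |F₂ (j+1) x| ≤ (ML/N + M₂) + U₂ * |q x| := by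
    intro j M₂ U₂ ML hM₂0 hU₂0 hML0 hM₂ hU₂ hML x hx
    rw [hF₂ j x, hsplit j (fun p => L (j+1-p) * u₂ p x)]
    simp only [Nat.sub_zero]
    calc |(-(L (j+1) * u₂ 0 x + ∑ p ∈ Finset.Icc 1 j, L (j+1-p) * u₂ p x) + q x * u₂ j x)|
        ≤ |L (j+1) * u₂ 0 x| + |∑ p ∈ Finset.Icc 1 j, L (j+1-p) * u₂ p x| + |q x * u₂ j x| := by
          have := abs_add_le (L (j+1) * u₂ 0 x) (∑ p ∈ Finset.Icc 1 j, L (j+1-p) * u₂ p x)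
          have h2 := abs_add_le (-(L (j+1) * u₂ 0 x + ∑ p ∈ Finset.Icc 1 j, L (j+1-p) * u₂ p x))
            (q x * u₂ j x)
          rw [abs_neg] at h2
          linarith
      _ ≤ ML * (1/N) + M₂ + U₂ * |q x| := by
          refine add_le_add (add_le_add ?_ (hM₂ x hx)) ?_
          · rw [abs_mul]
            exact mul_le_mul hML (hb20 x) (abs_nonneg _) hML0
          · rw [abs_mul, mul_comm]
            exact mul_le_mul_of_nonneg_right (hU₂ x hx) (abs_nonneg _)
      _ = (ML/N + M₂) + U₂ * |q x| := by ring
  -- bound for u₁ (j+1)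
  have masterU₁ : ∀ (j : ℕ) (M₁ U₁ ML : ℝ), 0 ≤ M₁ → 0 ≤ U₁ → 0 ≤ ML →
      (∀ x ∈ Set.Icc (0:ℝ) (1/2), |∑ p ∈ Finset.Icc 1 j, L (j+1-p) * u₁ p x| ≤ M₁) →
      (∀ x ∈ Set.Icc (0:ℝ) (1/2), |u₁ j x| ≤ U₁) →
      |L (j+1)| ≤ ML →
      ∀ x ∈ Set.Icc (0:ℝ) (1/2),
        |u₁ (j+1) x| ≤ (1/(2*N)) * ((ML/(2*N) + M₁)/2 + U₁ * Q₁) := by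
    intro j M₁ U₁ ML hM₁0 hU₁0 hML0 hM₁ hU₁ hML x hx
    have hF := hFb₁ j M₁ U₁ ML hM₁0 hU₁0 hML0 hM₁ hU₁ hML
    rw [hu₁rec j x hx]
    have hKnn : (0:ℝ) ≤ (1/(2*N)) * (ML/(2*N) + M₁) := by positivity
    have hK'nn : (0:ℝ) ≤ (1/(2*N)) * U₁ := by positivity
    have h1 : |∫ ξ in (0:ℝ)..x,
        (Real.sin (2 * π * (n:ℝ) * (x - ξ)) / (2 * π * (n:ℝ))) * F₁ (j+1) ξ|
        ≤ ((1/(2*N)) * (ML/(2*N) + M₁)) * (x - 0) + ((1/(2*N)) * U₁) * ∫ t in (0:ℝ)..x, |q t| := by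
      apply key_int _ 0 x _ _ hx.1 (hqx1 x hx) hKnn hK'nn
      intro ξ hξ
      have hξ' : ξ ∈ Set.Icc (0:ℝ) (1/2) := ⟨le_of_lt hξ.1, hξ.2.trans hx.2⟩
      rw [abs_mul]
      calc |Real.sin (2 * π * (n:ℝ) * (x - ξ)) / (2 * π * (n:ℝ))| * |F₁ (j+1) ξ|
          ≤ (1/(2*N)) * ((ML/(2*N) + M₁) + U₁ * |q ξ|) := by
            apply mul_le_mul (hker _) (hF ξ hξ') (abs_nonneg _) (by positivity)
        _ = (1/(2*N)) * (ML/(2*N) + M₁) + ((1/(2*N)) * U₁) * |q ξ| := by ring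
    have h2 : ((1/(2*N)) * (ML/(2*N) + M₁)) * (x - 0) + ((1/(2*N)) * U₁) * ∫ t in (0:ℝ)..x, |q t|
        ≤ ((1/(2*N)) * (ML/(2*N) + M₁)) * (1/2) + ((1/(2*N)) * U₁) * Q₁ := by
      refine add_le_add ?_ (mul_le_mul_of_nonneg_left (hqmono1 x hx) hK'nn)
      apply mul_le_mul_of_nonneg_left _ hKnn
      linarith [hx.2]
    refine (h1.trans h2).trans (le_of_eq (by ring))
  -- bound for u₂ (j+1)
  have masterU₂ : ∀ (j : ℕ) (M₁ M₂ U₁ U₂ ML : ℝ), 0 ≤ M₁ → 0 ≤ M₂ → 0 ≤ U₁ → 0 ≤ U₂ → 0 ≤ ML →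
      (∀ x ∈ Set.Icc (0:ℝ) (1/2), |∑ p ∈ Finset.Icc 1 j, L (j+1-p) * u₁ p x| ≤ M₁) →
      (∀ x ∈ Set.Icc (1/2:ℝ) 1, |∑ p ∈ Finset.Icc 1 j, L (j+1-p) * u₂ p x| ≤ M₂) →
      (∀ x ∈ Set.Icc (0:ℝ) (1/2), |u₁ j x| ≤ U₁) →
      (∀ x ∈ Set.Icc (1/2:ℝ) 1, |u₂ j x| ≤ U₂) →
      |L (j+1)| ≤ ML →
      ∀ x ∈ Set.Icc (1/2:ℝ) 1,
        |u₂ (j+1) x| ≤ (1/(2*N)) * ((ML/(2*N) + M₁)/2 + U₁ * Q₁)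
          + (1/N) * ((ML/N + M₂)/2 + U₂ * Q₂) := by
    intro j M₁ M₂ U₁ U₂ ML hM₁0 hM₂0 hU₁0 hU₂0 hML0 hM₁ hM₂ hU₁ hU₂ hML x hx
    have hF1 := hFb₁ j M₁ U₁ ML hM₁0 hU₁0 hML0 hM₁ hU₁ hML
    have hF2 := hFb₂ j M₂ U₂ ML hM₂0 hU₂0 hML0 hM₂ hU₂ hML
    have hKnn : (0:ℝ) ≤ (1/(2*N)) * (ML/(2*N) + M₁) := by positivity
    have hK'nn : (0:ℝ) ≤ (1/(2*N)) * U₁ := by positivity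
    have hK2nn : (0:ℝ) ≤ (1/(2*N)) * (ML/N + M₂) := by positivity
    have hK2'nn : (0:ℝ) ≤ (1/(2*N)) * U₂ := by positivity
    rw [hu₂rec j x hx]
    -- bound on c₂ (j+1)
    have hc : |c₂ (j+1)| ≤ ((1/(2*N)) * (ML/(2*N) + M₁)) * (1/2) + ((1/(2*N)) * U₁) * Q₁
        + (((1/(2*N)) * (ML/N + M₂)) * (1/2) + ((1/(2*N)) * U₂) * Q₂) := by
      rw [hc₂ j]
      have hA : |∫ x in (0:ℝ)..(1/2), (Real.cos (2 * π * (n:ℝ) * x) / (2 * π * (n:ℝ))) * F₁ (j+1) x|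
          ≤ ((1/(2*N)) * (ML/(2*N) + M₁)) * (1/2 - 0) + ((1/(2*N)) * U₁) * Q₁ := by
        rw [hQ₁def]
        apply key_int _ 0 (1/2) _ _ (by norm_num) hq1 hKnn hK'nn
        intro ξ hξ
        have hξ' : ξ ∈ Set.Icc (0:ℝ) (1/2) := Set.Ioc_subset_Icc_self hξ
        rw [abs_mul]
        calc |Real.cos (2 * π * (n:ℝ) * ξ) / (2 * π * (n:ℝ))| * |F₁ (j+1) ξ|
            ≤ (1/(2*N)) * ((ML/(2*N) + M₁) + U₁ * |q ξ|) := by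
              apply mul_le_mul (hkerc _) (hF1 ξ hξ') (abs_nonneg _) (by positivity)
          _ = (1/(2*N)) * (ML/(2*N) + M₁) + ((1/(2*N)) * U₁) * |q ξ| := by ring
      have hB : |∫ x in (1/2:ℝ)..1, (Real.cos (2 * π * (n:ℝ) * x) / (2 * π * (n:ℝ))) * F₂ (j+1) x|
          ≤ ((1/(2*N)) * (ML/N + M₂)) * (1 - 1/2) + ((1/(2*N)) * U₂) * Q₂ := by
        rw [hQ₂def]
        apply key_int _ (1/2) 1 _ _ (by norm_num) hq2 hK2nn hK2'nn
        intro ξ hξ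
        have hξ' : ξ ∈ Set.Icc (1/2:ℝ) 1 := Set.Ioc_subset_Icc_self hξ
        rw [abs_mul]
        calc |Real.cos (2 * π * (n:ℝ) * ξ) / (2 * π * (n:ℝ))| * |F₂ (j+1) ξ|
            ≤ (1/(2*N)) * ((ML/N + M₂) + U₂ * |q ξ|) := by
              apply mul_le_mul (hkerc _) (hF2 ξ hξ') (abs_nonneg _) (by positivity)
          _ = (1/(2*N)) * (ML/N + M₂) + ((1/(2*N)) * U₂) * |q ξ| := by ring
      have := abs_sub
        (-(∫ x in (0:ℝ)..(1/2), (Real.cos (2 * π * (n:ℝ) * x) / (2 * π * (n:ℝ))) * F₁ (j+1) x))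
        (∫ x in (1/2:ℝ)..1, (Real.cos (2 * π * (n:ℝ) * x) / (2 * π * (n:ℝ))) * F₂ (j+1) x)
      rw [abs_neg] at this
      calc |(-(∫ x in (0:ℝ)..(1/2), (Real.cos (2 * π * (n:ℝ) * x) / (2 * π * (n:ℝ))) * F₁ (j+1) x)) -
            ∫ x in (1/2:ℝ)..1, (Real.cos (2 * π * (n:ℝ) * x) / (2 * π * (n:ℝ))) * F₂ (j+1) x|
          ≤ |∫ x in (0:ℝ)..(1/2), (Real.cos (2 * π * (n:ℝ) * x) / (2 * π * (n:ℝ))) * F₁ (j+1) x| +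
            |∫ x in (1/2:ℝ)..1, (Real.cos (2 * π * (n:ℝ) * x) / (2 * π * (n:ℝ))) * F₂ (j+1) x| := this
        _ ≤ _ := by
            refine add_le_add (hA.trans (le_of_eq (by ring))) (hB.trans (le_of_eq (by ring)))
    -- bound on the tail integral
    have hT : |∫ ξ in x..(1:ℝ),
        (Real.sin (2 * π * (n:ℝ) * (x - ξ)) / (2 * π * (n:ℝ))) * F₂ (j+1) ξ|
        ≤ ((1/(2*N)) * (ML/N + M₂)) * (1/2) + ((1/(2*N)) * U₂) * Q₂ := by
      have h1 : |∫ ξ in x..(1:ℝ),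
          (Real.sin (2 * π * (n:ℝ) * (x - ξ)) / (2 * π * (n:ℝ))) * F₂ (j+1) ξ|
          ≤ ((1/(2*N)) * (ML/N + M₂)) * (1 - x) + ((1/(2*N)) * U₂) * ∫ t in x..(1:ℝ), |q t| := by
        apply key_int _ x 1 _ _ hx.2 (hqx2 x hx) hK2nn hK2'nn
        intro ξ hξ
        have hξ' : ξ ∈ Set.Icc (1/2:ℝ) 1 := ⟨hx.1.trans (le_of_lt hξ.1), hξ.2⟩
        rw [abs_mul]
        calc |Real.sin (2 * π * (n:ℝ) * (x - ξ)) / (2 * π * (n:ℝ))| * |F₂ (j+1) ξ|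
            ≤ (1/(2*N)) * ((ML/N + M₂) + U₂ * |q ξ|) := by
              apply mul_le_mul (hker _) (hF2 ξ hξ') (abs_nonneg _) (by positivity)
          _ = (1/(2*N)) * (ML/N + M₂) + ((1/(2*N)) * U₂) * |q ξ| := by ring
      refine h1.trans (add_le_add ?_ (mul_le_mul_of_nonneg_left (hqmono2 x hx) hK2'nn))
      apply mul_le_mul_of_nonneg_left _ hK2nn
      linarith [hx.1]
    have habs := abs_sub (c₂ (j+1) * Real.sin (2 * π * (n:ℝ) * (1 - x)))
      (∫ ξ in x..(1:ℝ), (Real.sin (2 * π * (n:ℝ) * (x - ξ)) / (2 * π * (n:ℝ))) * F₂ (j+1) ξ)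
    have hcs : |c₂ (j+1) * Real.sin (2 * π * (n:ℝ) * (1 - x))| ≤ |c₂ (j+1)| := by
      rw [abs_mul]
      exact mul_le_of_le_one_right (abs_nonneg _) (Real.abs_sin_le_one _)
    refine habs.trans ?_
    refine (add_le_add (hcs.trans hc) hT).trans (le_of_eq (by ring))
  have hrpow : ∀ m : ℕ, (0:ℝ) ≤ r ^ m := fun m => pow_nonneg hr0 m
  -- the main inductive estimate
  have main : ∀ j : ℕ, 1 ≤ j →
      |L j| ≤ (24/407)*N*(r^j/((j:ℝ))^2) ∧
      (∀ x ∈ Set.Icc (0:ℝ) (1/2), |u₁ j x| ≤ (27/2000)*(r^j/((j:ℝ))^2)/N) ∧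
      (∀ x ∈ Set.Icc (1/2:ℝ) 1, |u₂ j x| ≤ (13/200)*(r^j/((j:ℝ))^2)/N) := by
    intro j
    induction j using Nat.strong_induction_on with
    | _ j ih =>
      intro hj1
      rcases j with _ | k
      · exact absurd hj1 (by norm_num)
      rcases Nat.eq_zero_or_pos k with rfl | hk
      · -- base case j = 1
        have hM₁ : ∀ x ∈ Set.Icc (0:ℝ) (1/2),
            |∑ p ∈ Finset.Icc 1 0, L (0+1-p) * u₁ p x| ≤ (0:ℝ) := by
          intro x _; simp
        have hM₂ : ∀ x ∈ Set.Icc (1/2:ℝ) 1,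
            |∑ p ∈ Finset.Icc 1 0, L (0+1-p) * u₂ p x| ≤ (0:ℝ) := by
          intro x _; simp
        have hLb := masterL 0 0 0 (1/(2*N)) (1/N) le_rfl le_rfl (by positivity) (by positivity)
          hM₁ hM₂ (fun x _ => hb10 x) (fun x _ => hb20 x)
        have hL1 : |L 1| ≤ (24/407)*N*r := by
          have e : (8*N/3) * (((0:ℝ)+0)/2 + Q₁*(1/(2*N)) + Q₂*(1/N)) = (8/3)*(Q₁/2 + Q₂) := by
            field_simp; ring
          have h2 : (8/3)*(Q₁/2 + Q₂) ≤ (8/3)*Q := by nlinarith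
          have h3 : (8/3)*Q ≤ (24/407)*(N*r) := by nlinarith
          calc |L 1| ≤ (8*N/3) * (((0:ℝ)+0)/2 + Q₁*(1/(2*N)) + Q₂*(1/N)) := hLb
            _ = (8/3)*(Q₁/2 + Q₂) := e
            _ ≤ (8/3)*Q := h2
            _ ≤ (24/407)*N*r := h3.trans (le_of_eq (by ring))
        have hML0 : (0:ℝ) ≤ (24/407)*N*r := by positivity
        have hU1 := masterU₁ 0 0 (1/(2*N)) ((24/407)*N*r) le_rfl (by positivity) hML0
          hM₁ (fun x _ => hb10 x) hL1
        have hU2 := masterU₂ 0 0 0 (1/(2*N)) (1/N) ((24/407)*N*r) le_rfl le_rfl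
          (by positivity) (by positivity) hML0 hM₁ hM₂
          (fun x _ => hb10 x) (fun x _ => hb20 x) hL1
        have hQ₁r : Q₁ ≤ (9/407)*(N*r) := hQ₁.trans hQr
        have hQ₂r : Q₂ ≤ (9/407)*(N*r) := hQ₂.trans hQr
        refine ⟨?_, ?_, ?_⟩
        · simpa using hL1
        · intro x hx
          have h := hU1 x hx
          have hstep : (1/(2*N)) * ((((24/407)*N*r)/(2*N) + 0)/2 + (1/(2*N)) * Q₁)
              ≤ (27/2000)*(r^1/((1:ℕ):ℝ)^2)/N := by
            have e1 : (((24/407)*N*r)/(2*N) + 0)/2 = (6/407)*r := by field_simp; ring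
            have e2 : (1/(2*N)) * Q₁ ≤ (9/814)*r := by
              rw [div_mul_eq_mul_div, one_mul]
              rw [div_le_iff₀ (by positivity)]
              calc Q₁ ≤ (9/407)*(N*r) := hQ₁r
                _ = (9/814)*r*(2*N) := by ring
            calc (1/(2*N)) * ((((24/407)*N*r)/(2*N) + 0)/2 + (1/(2*N)) * Q₁)
                ≤ (1/(2*N)) * ((6/407)*r + (9/814)*r) := by
                  apply mul_le_mul_of_nonneg_left _ (by positivity)
                  rw [e1]; linarith
              _ = (21/1628)*r/N := by field_simp; ring
              _ ≤ (27/2000)*(r^1/((1:ℕ):ℝ)^2)/N := by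
                  simp only [Nat.cast_one, one_pow, pow_one]
                  rw [div_le_div_iff₀ hN hN, div_one]
                  linarith [mul_nonneg hr0 hN.le]
          simpa using h.trans hstep
        · intro x hx
          have h := hU2 x hx
          have hstep : (1/(2*N)) * ((((24/407)*N*r)/(2*N) + 0)/2 + (1/(2*N)) * Q₁)
              + (1/N) * ((((24/407)*N*r)/N + 0)/2 + (1/N) * Q₂)
              ≤ (13/200)*(r^1/((1:ℕ):ℝ)^2)/N := by
            have e1 : (((24/407)*N*r)/(2*N) + 0)/2 = (6/407)*r := by field_simp; ring
            have e2 : (1/(2*N)) * Q₁ ≤ (9/814)*r := by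
              rw [div_mul_eq_mul_div, one_mul, div_le_iff₀ (by positivity)]
              calc Q₁ ≤ (9/407)*(N*r) := hQ₁r
                _ = (9/814)*r*(2*N) := by ring
            have e3 : (((24/407)*N*r)/N + 0)/2 = (12/407)*r := by field_simp; ring
            have e4 : (1/N) * Q₂ ≤ (9/407)*r := by
              rw [div_mul_eq_mul_div, one_mul, div_le_iff₀ (by positivity)]
              calc Q₂ ≤ (9/407)*(N*r) := hQ₂r
                _ = (9/407)*r*N := by ring
            calc (1/(2*N)) * ((((24/407)*N*r)/(2*N) + 0)/2 + (1/(2*N)) * Q₁)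
                + (1/N) * ((((24/407)*N*r)/N + 0)/2 + (1/N) * Q₂)
                ≤ (1/(2*N)) * ((6/407)*r + (9/814)*r) + (1/N) * ((12/407)*r + (9/407)*r) := by
                  refine add_le_add ?_ ?_
                  · apply mul_le_mul_of_nonneg_left _ (by positivity)
                    rw [e1]; linarith
                  · apply mul_le_mul_of_nonneg_left _ (by positivity)
                    rw [e3]; linarith
              _ = (105/1628)*r/N := by field_simp; ring
              _ ≤ (13/200)*(r^1/((1:ℕ):ℝ)^2)/N := by
                  simp only [Nat.cast_one, one_pow, pow_one]
                  rw [div_le_div_iff₀ hN hN, div_one]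
                  linarith [mul_nonneg hr0 hN.le]
          simpa using h.trans hstep
      · -- inductive step: j = k+1 with k ≥ 1
        have hk1 : (1:ℝ) ≤ (k:ℝ) := by exact_mod_cast hk
        have hkpos : (0:ℝ) < (k:ℝ) := by linarith
        obtain ⟨w, hw⟩ : ∃ w : ℝ, w = r^(k+1)/((k:ℝ)+1)^2 := ⟨_, rfl⟩
        obtain ⟨v, hv⟩ : ∃ v : ℝ, v = r^k/((k:ℝ))^2 := ⟨_, rfl⟩
        have hw0 : 0 ≤ w := by rw [hw]; positivity
        have hv0 : 0 ≤ v := by rw [hv]; positivity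
        have hvw : r*v ≤ 4*w := by
          rw [hv, hw]
          have e : r*(r^k/(k:ℝ)^2) = r^(k+1)/(k:ℝ)^2 := by rw [pow_succ]; ring
          have h2 : ((k:ℝ)+1)^2 ≤ 4*(k:ℝ)^2 := by nlinarith
          rw [e, show (4:ℝ)*(r^(k+1)/((k:ℝ)+1)^2) = (4*r^(k+1))/((k:ℝ)+1)^2 from by ring,
            div_le_div_iff₀ (by positivity) (by positivity)]
          nlinarith [mul_nonneg (hrpow (k+1)) (sub_nonneg.2 h2)]
        have ihk := ih k (by omega) hk
        have hU₁b : ∀ x ∈ Set.Icc (0:ℝ) (1/2), |u₁ k x| ≤ (27/2000)*v/N := by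
          intro x hx
          refine (ihk.2.1 x hx).trans (le_of_eq ?_)
          rw [hv]
        have hU₂b : ∀ x ∈ Set.Icc (1/2:ℝ) 1, |u₂ k x| ≤ (13/200)*v/N := by
          intro x hx
          refine (ihk.2.2 x hx).trans (le_of_eq ?_)
          rw [hv]
        -- the convolution estimates
        have hsum₁ : ∀ x ∈ Set.Icc (0:ℝ) (1/2),
            |∑ p ∈ Finset.Icc 1 k, L (k+1-p) * u₁ p x| ≤ (11/2)*((24/407)*(27/2000))*w := by
          intro x hx
          calc |∑ p ∈ Finset.Icc 1 k, L (k+1-p) * u₁ p x|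
              ≤ ∑ p ∈ Finset.Icc 1 k, |L (k+1-p) * u₁ p x| := Finset.abs_sum_le_sum_abs _ _
            _ ≤ ∑ p ∈ Finset.Icc 1 k,
                ((24/407)*(27/2000)*r^(k+1)) * (1/(((k+1-p:ℕ):ℝ)^2 * (p:ℝ)^2)) := by
                apply Finset.sum_le_sum
                intro p hp
                simp only [Finset.mem_Icc] at hp
                have h1 : 1 ≤ k+1-p := by omega
                have h2 : k+1-p < k+1 := by omega
                have ihL := (ih (k+1-p) h2 h1).1
                have ihU := (ih p (by omega) hp.1).2.1 x hx
                have hA : (0:ℝ) < ((k+1-p:ℕ):ℝ) := by exact_mod_cast h1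
                have hP : (0:ℝ) < (p:ℝ) := by exact_mod_cast hp.1
                have hpow : r^(k+1-p) * r^p = r^(k+1) := by
                  rw [← pow_add]; congr 1; omega
                rw [abs_mul]
                have hmul := mul_le_mul ihL ihU (abs_nonneg _) (by positivity)
                refine hmul.trans (le_of_eq ?_)
                rw [← hpow]
                field_simp
            _ = ((24/407)*(27/2000)*r^(k+1)) *
                ∑ p ∈ Finset.Icc 1 k, (1:ℝ)/(((k+1-p:ℕ):ℝ)^2 * (p:ℝ)^2) := by
                rw [Finset.mul_sum]
            _ ≤ ((24/407)*(27/2000)*r^(k+1)) * ((11/2)/((k:ℝ)+1)^2) :=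
                mul_le_mul_of_nonneg_left (conv_le k) (by positivity)
            _ = (11/2)*((24/407)*(27/2000))*w := by rw [hw]; ring
        have hsum₂ : ∀ x ∈ Set.Icc (1/2:ℝ) 1,
            |∑ p ∈ Finset.Icc 1 k, L (k+1-p) * u₂ p x| ≤ (11/2)*((24/407)*(13/200))*w := by
          intro x hx
          calc |∑ p ∈ Finset.Icc 1 k, L (k+1-p) * u₂ p x|
              ≤ ∑ p ∈ Finset.Icc 1 k, |L (k+1-p) * u₂ p x| := Finset.abs_sum_le_sum_abs _ _
            _ ≤ ∑ p ∈ Finset.Icc 1 k,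
                ((24/407)*(13/200)*r^(k+1)) * (1/(((k+1-p:ℕ):ℝ)^2 * (p:ℝ)^2)) := by
                apply Finset.sum_le_sum
                intro p hp
                simp only [Finset.mem_Icc] at hp
                have h1 : 1 ≤ k+1-p := by omega
                have h2 : k+1-p < k+1 := by omega
                have ihL := (ih (k+1-p) h2 h1).1
                have ihU := (ih p (by omega) hp.1).2.2 x hx
                have hA : (0:ℝ) < ((k+1-p:ℕ):ℝ) := by exact_mod_cast h1
                have hP : (0:ℝ) < (p:ℝ) := by exact_mod_cast hp.1
                have hpow : r^(k+1-p) * r^p = r^(k+1) := by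
                  rw [← pow_add]; congr 1; omega
                rw [abs_mul]
                have hmul := mul_le_mul ihL ihU (abs_nonneg _) (by positivity)
                refine hmul.trans (le_of_eq ?_)
                rw [← hpow]
                field_simp
            _ = ((24/407)*(13/200)*r^(k+1)) *
                ∑ p ∈ Finset.Icc 1 k, (1:ℝ)/(((k+1-p:ℕ):ℝ)^2 * (p:ℝ)^2) := by
                rw [Finset.mul_sum]
            _ ≤ ((24/407)*(13/200)*r^(k+1)) * ((11/2)/((k:ℝ)+1)^2) :=
                mul_le_mul_of_nonneg_left (conv_le k) (by positivity)
            _ = (11/2)*((24/407)*(13/200))*w := by rw [hw]; ring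
        have hM₁0 : (0:ℝ) ≤ (11/2)*((24/407)*(27/2000))*w := by positivity
        have hM₂0 : (0:ℝ) ≤ (11/2)*((24/407)*(13/200))*w := by positivity
        have hU₁0' : (0:ℝ) ≤ (27/2000)*v/N := by positivity
        have hU₂0' : (0:ℝ) ≤ (13/200)*v/N := by positivity
        have hLb := masterL k ((11/2)*((24/407)*(27/2000))*w) ((11/2)*((24/407)*(13/200))*w)
          ((27/2000)*v/N) ((13/200)*v/N) hM₁0 hM₂0 hU₁0' hU₂0' hsum₁ hsum₂ hU₁b hU₂b
        have hQU : Q₁*((27/2000)*v/N) + Q₂*((13/200)*v/N) ≤ (36/407)*(13/200)*w := by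
          have hU12 : (27/2000)*v/N ≤ (13/200)*v/N := by
            apply (div_le_div_iff_of_pos_right hN).2
            exact mul_le_mul_of_nonneg_right (by norm_num) hv0
          have h1 : Q₁*((27/2000)*v/N) ≤ Q₁*((13/200)*v/N) :=
            mul_le_mul_of_nonneg_left hU12 hQ₁0
          have h2 : Q₁*((13/200)*v/N) + Q₂*((13/200)*v/N) = Q*((13/200)*v/N) := by
            rw [← hQsum]; ring
          have h3 : Q*((13/200)*v/N) ≤ ((9/407)*(N*r))*((13/200)*v/N) :=
            mul_le_mul_of_nonneg_right hQr hU₂0'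
          have h4 : ((9/407)*(N*r))*((13/200)*v/N) = (9/407)*(13/200)*(r*v) := by
            field_simp
          have h5 : (9/407)*(13/200)*(r*v) ≤ (9/407)*(13/200)*(4*w) := by linarith [hvw]
          linarith [h1, h2, h3, h4, h5]
        have hUQ₁ : ((27/2000)*v/N)*Q₁ ≤ (36/407)*(27/2000)*w := by
          have h1 : ((27/2000)*v/N)*Q₁ ≤ ((27/2000)*v/N)*((9/407)*(N*r)) :=
            mul_le_mul_of_nonneg_left (hQ₁.trans hQr) hU₁0'
          have h2 : ((27/2000)*v/N)*((9/407)*(N*r)) = (9/407)*(27/2000)*(r*v) := by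
            field_simp
          have h3 : (9/407)*(27/2000)*(r*v) ≤ (9/407)*(27/2000)*(4*w) := by linarith [hvw]
          linarith [h1, h2, h3]
        have hUQ₂ : ((13/200)*v/N)*Q₂ ≤ (36/407)*(13/200)*w := by
          have h1 : ((13/200)*v/N)*Q₂ ≤ ((13/200)*v/N)*((9/407)*(N*r)) :=
            mul_le_mul_of_nonneg_left (hQ₂.trans hQr) hU₂0'
          have h2 : ((13/200)*v/N)*((9/407)*(N*r)) = (9/407)*(13/200)*(r*v) := by
            field_simp
          have h3 : (9/407)*(13/200)*(r*v) ≤ (9/407)*(13/200)*(4*w) := by linarith [hvw]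
          linarith [h1, h2, h3]
        have hL : |L (k+1)| ≤ (24/407)*N*w := by
          calc |L (k+1)| ≤ (8*N/3) * (((11/2)*((24/407)*(27/2000))*w + (11/2)*((24/407)*(13/200))*w)/2
                + Q₁*((27/2000)*v/N) + Q₂*((13/200)*v/N)) := hLb
            _ ≤ (8*N/3) * (((11/2)*((24/407)*(27/2000))*w + (11/2)*((24/407)*(13/200))*w)/2
                + (36/407)*(13/200)*w) := by
                apply mul_le_mul_of_nonneg_left _ (by positivity)
                linarith [hQU]
            _ ≤ (24/407)*N*w := by linarith [mul_nonneg hN.le hw0]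
        have hML0' : (0:ℝ) ≤ (24/407)*N*w := by positivity
        have hU1 := masterU₁ k ((11/2)*((24/407)*(27/2000))*w) ((27/2000)*v/N) ((24/407)*N*w)
          hM₁0 hU₁0' hML0' hsum₁ hU₁b hL
        have hU2 := masterU₂ k ((11/2)*((24/407)*(27/2000))*w) ((11/2)*((24/407)*(13/200))*w)
          ((27/2000)*v/N) ((13/200)*v/N) ((24/407)*N*w)
          hM₁0 hM₂0 hU₁0' hU₂0' hML0' hsum₁ hsum₂ hU₁b hU₂b hL
        have hcast : ((k:ℝ)+1) = (((k+1:ℕ)):ℝ) := by push_cast; ring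
        have e1 : ((24/407)*N*w)/(2*N) = (12/407)*w := by field_simp; ring
        have e2 : ((24/407)*N*w)/N = (24/407)*w := by field_simp
        refine ⟨?_, ?_, ?_⟩
        · refine hL.trans (le_of_eq ?_)
          rw [hw, hcast]
        · intro x hx
          have h := hU1 x hx
          calc |u₁ (k+1) x|
              ≤ (1/(2*N)) * ((((24/407)*N*w)/(2*N) + (11/2)*((24/407)*(27/2000))*w)/2
                + ((27/2000)*v/N)*Q₁) := h
            _ ≤ (1/(2*N)) * (((12/407)*w + (11/2)*((24/407)*(27/2000))*w)/2
                + (36/407)*(27/2000)*w) := by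
                apply mul_le_mul_of_nonneg_left _ (by positivity)
                rw [e1]; linarith [hUQ₁]
            _ ≤ (1/(2*N)) * ((27/1000)*w) := by
                apply mul_le_mul_of_nonneg_left _ (by positivity)
                linarith [hw0]
            _ = (27/2000)*w/N := by
                rw [div_mul_eq_mul_div, one_mul,
                  div_eq_div_iff ((by positivity : (0:ℝ) < 2*N).ne') (ne_of_gt hN)]
                ring
            _ = (27/2000)*(r^(k+1)/(((k+1:ℕ)):ℝ)^2)/N := by rw [hw, hcast]
        · intro x hx
          have h := hU2 x hx
          calc |u₂ (k+1) x|
              ≤ (1/(2*N)) * ((((24/407)*N*w)/(2*N) + (11/2)*((24/407)*(27/2000))*w)/2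
                + ((27/2000)*v/N)*Q₁)
                + (1/N) * ((((24/407)*N*w)/N + (11/2)*((24/407)*(13/200))*w)/2
                + ((13/200)*v/N)*Q₂) := h
            _ ≤ (1/(2*N)) * (((12/407)*w + (11/2)*((24/407)*(27/2000))*w)/2
                + (36/407)*(27/2000)*w)
                + (1/N) * (((24/407)*w + (11/2)*((24/407)*(13/200))*w)/2
                + (36/407)*(13/200)*w) := by
                refine add_le_add ?_ ?_
                · apply mul_le_mul_of_nonneg_left _ (by positivity)
                  rw [e1]; linarith [hUQ₁]
                · apply mul_le_mul_of_nonneg_left _ (by positivity)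
                  rw [e2]; linarith [hUQ₂]
            _ ≤ (1/(2*N)) * ((19/1000)*w) + (1/N) * ((47/1000)*w) := by
                refine add_le_add ?_ ?_
                · apply mul_le_mul_of_nonneg_left _ (by positivity)
                  linarith [hw0]
                · apply mul_le_mul_of_nonneg_left _ (by positivity)
                  linarith [hw0]
            _ ≤ (13/200)*w/N := by
                rw [le_div_iff₀ hN]
                have e : ((1/(2*N)) * ((19/1000)*w) + (1/N) * ((47/1000)*w)) * N
                    = (19/2000)*w + (47/1000)*w := by
                  field_simp
                  ring
                rw [e]
                linarith [hw0]
            _ = (13/200)*(r^(k+1)/(((k+1:ℕ)):ℝ)^2)/N := by rw [hw, hcast]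
  -- assemble the conclusion
  obtain ⟨C, hCdef⟩ : ∃ C : ℝ, C = (24/407)*N + (13/200)/N + 1 := ⟨_, rfl⟩
  have hC0 : 0 < C := by rw [hCdef]; positivity
  have hbnd : ∀ j : ℕ, 1 ≤ j →
      |L j| ≤ C * r^j ∧ (∀ x ∈ Set.Icc (0:ℝ) (1/2), |u₁ j x| ≤ C * r^j) ∧
      (∀ x ∈ Set.Icc (1/2:ℝ) 1, |u₂ j x| ≤ C * r^j) := by
    intro j hj
    obtain ⟨hLj, hu1j, hu2j⟩ := main j hj
    have hj1 : (1:ℝ) ≤ (j:ℝ) := by exact_mod_cast hj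
    have hjsq : (1:ℝ) ≤ ((j:ℝ))^2 := by nlinarith [hj1]
    have hfrac : r^j/((j:ℝ))^2 ≤ r^j := by
      rw [div_le_iff₀ (by positivity)]
      nlinarith [hrpow j, hjsq]
    have hfrac0 : (0:ℝ) ≤ r^j/((j:ℝ))^2 := by positivity
    have hCN : (24/407)*N ≤ C := by
      rw [hCdef]
      have h1 : (0:ℝ) < (13/200)/N := by positivity
      linarith
    have hCu : (13/200)/N ≤ C := by
      rw [hCdef]
      have h1 : (0:ℝ) < (24/407)*N := by positivity
      linarith
    have hCu1 : (27/2000)/N ≤ C := by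
      refine le_trans ?_ hCu
      exact (div_le_div_iff_of_pos_right hN).2 (by norm_num)
    refine ⟨?_, ?_, ?_⟩
    · calc |L j| ≤ (24/407)*N*(r^j/((j:ℝ))^2) := hLj
        _ ≤ (24/407)*N*(r^j) := mul_le_mul_of_nonneg_left hfrac (by positivity)
        _ ≤ C * r^j := mul_le_mul_of_nonneg_right hCN (hrpow j)
    · intro x hx
      calc |u₁ j x| ≤ (27/2000)*(r^j/((j:ℝ))^2)/N := hu1j x hx
        _ = ((27/2000)/N)*(r^j/((j:ℝ))^2) := by ring
        _ ≤ ((27/2000)/N)*(r^j) := mul_le_mul_of_nonneg_left hfrac (by positivity)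
        _ ≤ C * r^j := mul_le_mul_of_nonneg_right hCu1 (hrpow j)
    · intro x hx
      calc |u₂ j x| ≤ (13/200)*(r^j/((j:ℝ))^2)/N := hu2j x hx
        _ = ((13/200)/N)*(r^j/((j:ℝ))^2) := by ring
        _ ≤ ((13/200)/N)*(r^j) := mul_le_mul_of_nonneg_left hfrac (by positivity)
        _ ≤ C * r^j := mul_le_mul_of_nonneg_right hCu (hrpow j)
  have hgeo : Summable (fun j : ℕ => r^j) := summable_geometric_of_lt_one hr0 hrlt
  have hshift : ∀ m' : ℕ, Summable (fun j : ℕ => C * r^(m'+1) * r^j) :=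
    fun m' => hgeo.mul_left _
  have hgs : Summable (fun j : ℕ => C * r^(j+1)) :=
    (hgeo.mul_left (C*r)).congr (fun j => by rw [pow_succ]; ring)
  have hLshift : ∀ m' : ℕ, ∀ j : ℕ, C * r^(j+m'+1) = C * r^(m'+1) * r^j := by
    intro m' j
    rw [show j+m'+1 = (m'+1)+j from by omega, pow_add]
    ring
  refine ⟨C, hC0, hbnd, ?_, ?_, ?_, ?_, ?_, ?_⟩
  · -- Summable |L|
    have h1 : Summable (fun j : ℕ => |L (j+1)|) := by
      exact Summable.of_nonneg_of_le (fun j => abs_nonneg _)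
        (fun j => (hbnd (j+1) (by omega)).1) hgs
    exact (summable_nat_add_iff 1).1 h1
  · -- Summable u₁
    intro x hx
    have h1 : Summable (fun j : ℕ => u₁ (j+1) x) := by
      apply Summable.of_norm
      exact Summable.of_nonneg_of_le (fun j => norm_nonneg _)
        (fun j => by rw [Real.norm_eq_abs]; exact (hbnd (j+1) (by omega)).2.1 x hx) hgs
    exact (summable_nat_add_iff 1).1 h1
  · -- Summable u₂
    intro x hx
    have h1 : Summable (fun j : ℕ => u₂ (j+1) x) := by
      apply Summable.of_norm
      exact Summable.of_nonneg_of_le (fun j => norm_nonneg _)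
        (fun j => by rw [Real.norm_eq_abs]; exact (hbnd (j+1) (by omega)).2.2 x hx) hgs
    exact (summable_nat_add_iff 1).1 h1
  · -- tail bound for L
    intro m'
    have hb : ∀ j : ℕ, |L (j+m'+1)| ≤ C * r^(m'+1) * r^j := by
      intro j
      refine ((hbnd (j+m'+1) (by omega)).1).trans (le_of_eq (hLshift m' j))
    have hsum' : Summable (fun j => |L (j+m'+1)|) :=
      Summable.of_nonneg_of_le (fun j => abs_nonneg _) hb (hshift m')
    calc (∑' j : ℕ, |L (j+m'+1)|) ≤ ∑' j : ℕ, C * r^(m'+1) * r^j :=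
          Summable.tsum_le_tsum hb hsum' (hshift m')
      _ = C * r^(m'+1) * ∑' j : ℕ, r^j := tsum_mul_left
      _ = C * r^(m'+1) * (1-r)⁻¹ := by rw [tsum_geometric_of_lt_one hr0 hrlt]
      _ = C * r^(m'+1)/(1-r) := by rw [div_eq_mul_inv]
  · -- tail bound for u₁
    intro m' x hx
    have hb : ∀ j : ℕ, ‖u₁ (j+m'+1) x‖ ≤ C * r^(m'+1) * r^j := by
      intro j
      rw [Real.norm_eq_abs]
      refine ((hbnd (j+m'+1) (by omega)).2.1 x hx).trans (le_of_eq (hLshift m' j))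
    have hsum' : Summable (fun j => ‖u₁ (j+m'+1) x‖) :=
      Summable.of_nonneg_of_le (fun j => norm_nonneg _) hb (hshift m')
    calc |∑' j : ℕ, u₁ (j+m'+1) x| = ‖∑' j : ℕ, u₁ (j+m'+1) x‖ := (Real.norm_eq_abs _).symm
      _ ≤ ∑' j : ℕ, ‖u₁ (j+m'+1) x‖ := norm_tsum_le_tsum_norm hsum'
      _ ≤ ∑' j : ℕ, C * r^(m'+1) * r^j := Summable.tsum_le_tsum hb hsum' (hshift m')
      _ = C * r^(m'+1) * ∑' j : ℕ, r^j := tsum_mul_left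
      _ = C * r^(m'+1) * (1-r)⁻¹ := by rw [tsum_geometric_of_lt_one hr0 hrlt]
      _ = C * r^(m'+1)/(1-r) := by rw [div_eq_mul_inv]
  · -- tail bound for u₂
    intro m' x hx
    have hb : ∀ j : ℕ, ‖u₂ (j+m'+1) x‖ ≤ C * r^(m'+1) * r^j := by
      intro j
      rw [Real.norm_eq_abs]
      refine ((hbnd (j+m'+1) (by omega)).2.2 x hx).trans (le_of_eq (hLshift m' j))
    have hsum' : Summable (fun j => ‖u₂ (j+m'+1) x‖) :=
      Summable.of_nonneg_of_le (fun j => norm_nonneg _) hb (hshift m')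
    calc |∑' j : ℕ, u₂ (j+m'+1) x| = ‖∑' j : ℕ, u₂ (j+m'+1) x‖ := (Real.norm_eq_abs _).symm
      _ ≤ ∑' j : ℕ, ‖u₂ (j+m'+1) x‖ := norm_tsum_le_tsum_norm hsum'
      _ ≤ ∑' j : ℕ, C * r^(m'+1) * r^j := Summable.tsum_le_tsum hb hsum' (hshift m')
      _ = C * r^(m'+1) * ∑' j : ℕ, r^j := tsum_mul_left
      _ = C * r^(m'+1) * (1-r)⁻¹ := by rw [tsum_geometric_of_lt_one hr0 hrlt]
      _ = C * r^(m'+1)/(1-r) := by rw [div_eq_mul_inv]
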